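/- Let F be a field and let (A₁, A₂) be a pair of nonzero 2×2 nilpotent matrices over F. Then there exists g ∈ GL₂(F) and a nonzero α ∈ F such that either (g A₁ g⁻¹, g A₂ g⁻¹) = (E₁₂, α E₁₂) or (g A₁ g⁻¹, g A₂ g⁻¹) = (E₁₂, α E₂₁). -/

import Mathlib

open Matrix

lemma nilp_entries {F : Type*} [Field F] (A : Matrix (Fin 2) (Fin 2) F)
    (h : A ^ 2 = 0) (hA : A ≠ 0) :
    A 1 1 = -A 0 0 ∧ A 0 1 * A 1 0 = -(A 0 0) ^ 2 := by
  rw [pow_two] at h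
  have e00 : (A * A) 0 0 = 0 := by rw [h]; rfl
  have e01 : (A * A) 0 1 = 0 := by rw [h]; rfl
  have e10 : (A * A) 1 0 = 0 := by rw [h]; rfl
  have e11 : (A * A) 1 1 = 0 := by rw [h]; rfl
  simp [Matrix.mul_apply, Fin.sum_univ_two] at e00 e01 e10 e11
  have htr : A 0 0 + A 1 1 = 0 := by
    by_cases hb : A 0 1 = 0
    · by_cases hc : A 1 0 = 0
      · exfalso
        apply hA
        have ha : A 0 0 = 0 := mul_self_eq_zero.mp (by linear_combination e00 - A 1 0 * hb)
        have hd : A 1 1 = 0 := mul_self_eq_zero.mp (by linear_combination e11 - A 0 1 * hc)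
        ext i j
        fin_cases i <;> fin_cases j <;> simp [ha, hb, hc, hd]
      · have : A 1 0 * (A 0 0 + A 1 1) = 0 := by linear_combination e10
        rcases mul_eq_zero.mp this with h' | h'
        · exact absurd h' hc
        · exact h'
    · have : A 0 1 * (A 0 0 + A 1 1) = 0 := by linear_combination e01
      rcases mul_eq_zero.mp this with h' | h'
      · exact absurd h' hb
      · exact h'
  exact ⟨by linear_combination htr, by linear_combination e00⟩

lemma conj_to_E12 {F : Type*} [Field F] (A : Matrix (Fin 2) (Fin 2) F)
    (h : A ^ 2 = 0) (hA : A ≠ 0) :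
    ∃ g : GL (Fin 2) F,
      (g : Matrix (Fin 2) (Fin 2) F) * A * (↑g⁻¹ : Matrix (Fin 2) (Fin 2) F) = !![0, 1; 0, 0] := by
  obtain ⟨hd, hbc⟩ := nilp_entries A h hA
  set a := A 0 0 with ha'
  set b := A 0 1 with hb'
  set c := A 1 0 with hc'
  have hAeq : A = !![a, b; c, -a] := by
    rw [Matrix.eta_fin_two A, ← ha', ← hb', ← hc', hd]
  by_cases hc : c = 0
  · have ha : a = 0 := by
      have : a ^ 2 = 0 := by linear_combination hbc - b * hc
      exact pow_eq_zero_iff (n := 2) (by norm_num) |>.mp this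
    have hb : b ≠ 0 := by
      intro hb
      refine hA ?_
      rw [hAeq, ha, hb, hc]
      ext i j
      fin_cases i <;> fin_cases j <;> simp
    refine ⟨⟨!![1, 0; 0, b], !![1, 0; 0, b⁻¹], ?_, ?_⟩, ?_⟩
    · ext i j
      fin_cases i <;> fin_cases j <;>
        simp [Matrix.mul_fin_two, Matrix.one_fin_two, hb]
    · ext i j
      fin_cases i <;> fin_cases j <;>
        simp [Matrix.mul_fin_two, Matrix.one_fin_two, hb]
    · show !![1, 0; 0, b] * A * !![1, 0; 0, b⁻¹] = _
      rw [hAeq, ha, hc]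
      ext i j
      fin_cases i <;> fin_cases j <;> simp [Matrix.mul_fin_two, hb]
  · have hb2 : b = -(a ^ 2) * c⁻¹ := by
      field_simp
      linear_combination hbc
    refine ⟨⟨!![0, c⁻¹; 1, -a * c⁻¹], !![a, 1; c, 0], ?_, ?_⟩, ?_⟩
    · ext i j
      fin_cases i <;> fin_cases j <;>
        simp [Matrix.mul_fin_two, Matrix.one_fin_two] <;> field_simp <;> ring
    · ext i j
      fin_cases i <;> fin_cases j <;>
        simp [Matrix.mul_fin_two, Matrix.one_fin_two] <;> (try field_simp) <;> (try ring)
    · show !![0, c⁻¹; 1, -a * c⁻¹] * A * !![a, 1; c, 0] = _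
      rw [hAeq, hb2]
      ext i j
      fin_cases i <;> fin_cases j <;>
        simp [Matrix.mul_fin_two] <;> (try field_simp) <;> (try ring)

lemma conj_step2 {F : Type*} [Field F] (B : Matrix (Fin 2) (Fin 2) F)
    (h : B ^ 2 = 0) (hB : B ≠ 0) :
    ∃ (g : GL (Fin 2) F) (α : F), α ≠ 0 ∧
      (g : Matrix (Fin 2) (Fin 2) F) * !![0, 1; 0, 0] * (↑g⁻¹ : Matrix (Fin 2) (Fin 2) F)
        = !![0, 1; 0, 0] ∧
      ((g : Matrix (Fin 2) (Fin 2) F) * B * (↑g⁻¹ : Matrix (Fin 2) (Fin 2) F) = α • !![0, 1; 0, 0] ∨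
       (g : Matrix (Fin 2) (Fin 2) F) * B * (↑g⁻¹ : Matrix (Fin 2) (Fin 2) F) = α • !![0, 0; 1, 0]) := by
  obtain ⟨hd, hbc⟩ := nilp_entries B h hB
  set a := B 0 0 with ha'
  set b := B 0 1 with hb'
  set c := B 1 0 with hc'
  have hBeq : B = !![a, b; c, -a] := by
    rw [Matrix.eta_fin_two B, ← ha', ← hb', ← hc', hd]
  by_cases hc : c = 0
  · have ha : a = 0 := by
      have : a ^ 2 = 0 := by linear_combination hbc - b * hc
      exact pow_eq_zero_iff (n := 2) (by norm_num) |>.mp this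
    have hb : b ≠ 0 := by
      intro hb
      refine hB ?_
      rw [hBeq, ha, hb, hc]
      ext i j
      fin_cases i <;> fin_cases j <;> simp
    refine ⟨1, b, hb, ?_, Or.inl ?_⟩
    · simp
    · simp only [Units.val_one, inv_one, one_mul, mul_one]
      rw [hBeq, ha, hc]
      ext i j
      fin_cases i <;> fin_cases j <;> simp [Matrix.smul_apply]
  · have hb2 : b = -(a ^ 2) * c⁻¹ := by
      field_simp
      linear_combination hbc
    refine ⟨⟨!![c, -a; 0, c], !![c⁻¹, a * (c^2)⁻¹; 0, c⁻¹], ?_, ?_⟩, c, hc, ?_, Or.inr ?_⟩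
    · ext i j
      fin_cases i <;> fin_cases j <;>
        simp [Matrix.mul_fin_two, Matrix.one_fin_two] <;> (try field_simp) <;> (try ring)
    · ext i j
      fin_cases i <;> fin_cases j <;>
        simp [Matrix.mul_fin_two, Matrix.one_fin_two] <;> (try field_simp) <;> (try ring)
    · show !![c, -a; 0, c] * !![0, 1; 0, 0] * !![c⁻¹, a * (c^2)⁻¹; 0, c⁻¹] = _
      ext i j
      fin_cases i <;> fin_cases j <;>
        simp [Matrix.mul_fin_two] <;> (try field_simp) <;> (try ring)
    · show !![c, -a; 0, c] * B * !![c⁻¹, a * (c^2)⁻¹; 0, c⁻¹] = _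
      rw [hBeq, hb2]
      ext i j
      fin_cases i <;> fin_cases j <;>
        simp [Matrix.mul_fin_two, Matrix.smul_apply] <;> (try field_simp) <;> (try ring) <;> tauto

theorem stmt_1 (F : Type*) [Field F] (A₁ A₂ : Matrix (Fin 2) (Fin 2) F)
    (h₁ : A₁ ^ 2 = 0) (h₂ : A₂ ^ 2 = 0) (hA₁ : A₁ ≠ 0) (hA₂ : A₂ ≠ 0) :
    ∃ (g : GL (Fin 2) F) (α : F), α ≠ 0 ∧
      ((g : Matrix (Fin 2) (Fin 2) F) * A₁ * (↑g⁻¹ : Matrix (Fin 2) (Fin 2) F) = !![0, 1; 0, 0] ∧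
        (g : Matrix (Fin 2) (Fin 2) F) * A₂ * (↑g⁻¹ : Matrix (Fin 2) (Fin 2) F) = α • !![0, 1; 0, 0]) ∨
      ((g : Matrix (Fin 2) (Fin 2) F) * A₁ * (↑g⁻¹ : Matrix (Fin 2) (Fin 2) F) = !![0, 1; 0, 0] ∧
        (g : Matrix (Fin 2) (Fin 2) F) * A₂ * (↑g⁻¹ : Matrix (Fin 2) (Fin 2) F) = α • !![0, 0; 1, 0]) := by
  obtain ⟨g₀, hg₀⟩ := conj_to_E12 A₁ h₁ hA₁
  set G : Matrix (Fin 2) (Fin 2) F := (g₀ : Matrix (Fin 2) (Fin 2) F) with hG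
  set Gi : Matrix (Fin 2) (Fin 2) F := (↑g₀⁻¹ : Matrix (Fin 2) (Fin 2) F) with hGi
  set B : Matrix (Fin 2) (Fin 2) F := G * A₂ * Gi with hBdef
  have key : Gi * G = 1 := by
    rw [hG, hGi, ← Units.val_mul, inv_mul_cancel, Units.val_one]
  have key' : G * Gi = 1 := by
    rw [hG, hGi, ← Units.val_mul, mul_inv_cancel, Units.val_one]
  have hB2 : B ^ 2 = 0 := by
    have h0 : B * B = G * (A₂ * A₂) * Gi := by
      rw [hBdef]
      simp only [Matrix.mul_assoc]
      rw [← Matrix.mul_assoc Gi G, key, Matrix.one_mul]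
    rw [pow_two, h0, ← pow_two, h₂]
    simp
  have hBne : B ≠ 0 := by
    intro h0
    apply hA₂
    have hrec : A₂ = Gi * B * G := by
      rw [hBdef]
      simp only [Matrix.mul_assoc]
      rw [← Matrix.mul_assoc Gi G, key, Matrix.one_mul, Matrix.mul_one]
    rw [hrec, h0]
    simp
  obtain ⟨h, α, hα, hE, hcase⟩ := conj_step2 B hB2 hBne
  set H : Matrix (Fin 2) (Fin 2) F := (h : Matrix (Fin 2) (Fin 2) F) with hH
  set Hi : Matrix (Fin 2) (Fin 2) F := (↑h⁻¹ : Matrix (Fin 2) (Fin 2) F) with hHi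
  have hcoe : ((h * g₀ : GL (Fin 2) F) : Matrix (Fin 2) (Fin 2) F) = H * G :=
    Units.val_mul _ _
  have hcoeinv : (↑(h * g₀)⁻¹ : Matrix (Fin 2) (Fin 2) F) = Gi * Hi := by
    rw [_root_.mul_inv_rev, Units.val_mul]
  have conj_eq : ∀ X : Matrix (Fin 2) (Fin 2) F,
      (H * G) * X * (Gi * Hi) = H * (G * X * Gi) * Hi := by
    intro X
    simp only [Matrix.mul_assoc]
  have hA1 : ((h * g₀ : GL (Fin 2) F) : Matrix (Fin 2) (Fin 2) F) * A₁ *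
      (↑(h * g₀)⁻¹ : Matrix (Fin 2) (Fin 2) F) = !![0, 1; 0, 0] := by
    rw [hcoe, hcoeinv, conj_eq, hg₀]
    exact hE
  have hA2' : ((h * g₀ : GL (Fin 2) F) : Matrix (Fin 2) (Fin 2) F) * A₂ *
      (↑(h * g₀)⁻¹ : Matrix (Fin 2) (Fin 2) F) = H * B * Hi := by
    rw [hcoe, hcoeinv, conj_eq, hBdef]
  rcases hcase with hc | hc
  · exact ⟨h * g₀, α, Or.inl ⟨hα, hA1, by rw [hA2']; exact hc⟩⟩
  · exact ⟨h * g₀, α, Or.inr ⟨hA1, by rw [hA2']; exact hc⟩⟩
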